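/- Let C = {(⌊φn⌋ − 1, ⌊φn⌋ + n − 1) : n ≥ 1} where φ = (1+√5)/2. If (a,b) ∈ C with a ≤ b, then for every integer x ≥ 1, the pair (a, b − x) (with both coordinates ordered appropriately) is not in C. -/

import Mathlib

noncomputable section

/-- The golden ratio. -/
def phi : ℝ := (1 + Real.sqrt 5) / 2

/-- The set `C = {(⌊φn⌋ - 1, ⌊φn⌋ + n - 1) : n ≥ 1}`. -/
def C : Set (ℕ × ℕ) :=
  {p | ∃ n : ℕ, 0 < n ∧ p = (⌊phi * n⌋₊ - 1, ⌊phi * n⌋₊ + n - 1)}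

lemma phi_eq : phi = Real.goldenRatio := rfl

lemma one_lt_phi : 1 < phi := phi_eq ▸ Real.one_lt_goldenRatio

lemma phi_pos : (0:ℝ) < phi := lt_trans zero_lt_one one_lt_phi

lemma phi_conj : Real.HolderConjugate phi (phi + 1) := by
  rw [Real.holderConjugate_iff]
  constructor
  · exact one_lt_phi
  · have hsq : phi ^ 2 = phi + 1 := phi_eq ▸ Real.goldenRatio_sq
    have h0 : (0:ℝ) < phi := phi_pos
    have h1 : (0:ℝ) < phi + 1 := by linarith
    field_simp
    linear_combination -hsq

lemma floor_phi_ge_one {n : ℕ} (hn : 0 < n) : 1 ≤ ⌊phi * n⌋₊ := by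
  apply Nat.le_floor
  have h1 : (1:ℝ) ≤ n := by exact_mod_cast hn
  push_cast
  nlinarith [one_lt_phi]

lemma floor_phi_strictMono {m n : ℕ} (h : m < n) : ⌊phi * m⌋₊ < ⌊phi * n⌋₊ := by
  have hm0 : (0:ℝ) ≤ phi * m := mul_nonneg phi_pos.le (Nat.cast_nonneg _)
  have h1 : (⌊phi * m⌋₊ : ℝ) ≤ phi * m := Nat.floor_le hm0
  have h2 : (m:ℝ) + 1 ≤ n := by exact_mod_cast h
  have : (⌊phi * m⌋₊ : ℝ) + 1 ≤ phi * n := by nlinarith [one_lt_phi]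
  have := Nat.le_floor (by exact_mod_cast this : ((⌊phi * m⌋₊ + 1 : ℕ) : ℝ) ≤ phi * n)
  omega

lemma beatty_disjoint {j : ℤ} (hj : 0 < j)
    (h1 : ∃ k > 0, beattySeq phi k = j) (h2 : ∃ k > 0, beattySeq (phi + 1) k = j) : False := by
  have hirr : Irrational phi := phi_eq ▸ Real.goldenRatio_irrational
  have hs := hirr.beattySeq_symmDiff_beattySeq_pos phi_conj
  have hmem : j ∈ symmDiff {x : ℤ | ∃ k > 0, beattySeq phi k = x}
      {x : ℤ | ∃ k > 0, beattySeq (phi + 1) k = x} := by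
    rw [hs]; exact hj
  rw [Set.mem_symmDiff] at hmem
  rcases hmem with ⟨_, hB⟩ | ⟨_, hA⟩
  · exact hB h2
  · exact hA h1

lemma nat_floor_beatty (n : ℕ) : beattySeq phi n = (⌊phi * n⌋₊ : ℤ) := by
  rw [beattySeq, Int.natCast_floor_eq_floor (mul_nonneg phi_pos.le (Nat.cast_nonneg _))]
  push_cast
  rw [mul_comm]

lemma nat_floor_beatty' (n : ℕ) : beattySeq (phi + 1) n = ((⌊phi * n⌋₊ + n : ℕ) : ℤ) := by
  have hnn : (0:ℝ) ≤ phi * n := mul_nonneg phi_pos.le (Nat.cast_nonneg _)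
  rw [beattySeq]
  have h2 : ((n:ℤ):ℝ) * (phi + 1) = phi * n + n := by push_cast; ring
  rw [h2, ← Int.natCast_floor_eq_floor (by positivity : (0:ℝ) ≤ phi * n + n),
    Nat.floor_add_natCast hnn]

/-- If `(a,b) ∈ C` with `a ≤ b` then for every `x ≥ 1` (with `b - x ≥ 0`),
neither `(a, b - x)` nor its swap lies in `C`. -/
theorem not_mem_C_of_sub_larger (a b : ℕ) (hC : (a, b) ∈ C) (hab : a ≤ b)
    (x : ℕ) (hx : 1 ≤ x) (hxb : x ≤ b) :
    (a, b - x) ∉ C ∧ (b - x, a) ∉ C := by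
  obtain ⟨n, hn, heq⟩ := hC
  rw [Prod.ext_iff] at heq
  obtain ⟨ha, hb⟩ := heq
  simp only at ha hb
  have hfn := floor_phi_ge_one hn
  constructor
  · rintro ⟨m, hm, heq'⟩
    rw [Prod.ext_iff] at heq'
    obtain ⟨ha', hb'⟩ := heq'
    simp only at ha' hb'
    have hfm := floor_phi_ge_one hm
    have hmn : m = n := by
      rcases lt_trichotomy m n with h | h | h
      · have := floor_phi_strictMono h; omega
      · exact h
      · have := floor_phi_strictMono h; omega
    subst hmn
    omega
  · rintro ⟨m, hm, heq'⟩
    rw [Prod.ext_iff] at heq'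
    obtain ⟨_, ha'⟩ := heq'
    simp only at ha'
    have hfm := floor_phi_ge_one hm
    -- a + 1 = ⌊phi n⌋ and a + 1 = ⌊phi m⌋ + m
    apply beatty_disjoint (j := (a:ℤ) + 1) (by positivity)
    · exact ⟨n, by exact_mod_cast hn, by rw [nat_floor_beatty]; omega⟩
    · exact ⟨m, by exact_mod_cast hm, by rw [nat_floor_beatty']; omega⟩

end
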